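/- Let X, Y, E be nonempty sets, ℋ a nonempty family of mappings from X to Y, G a Banach space, K a compact Hausdorff topological space, 0 < p < ∞, and let R : K × E × G → [0,∞) and S : ℋ × E × G → [0,∞) be maps satisfying properties (1), (2) and (3): (1) for each f ∈ ℋ there is x₀ ∈ E with R(φ, x₀, b) = S(f, x₀, b) = 0 for every φ ∈ K and b ∈ G; (2) for every x ∈ E and b ∈ G the map φ ↦ R(φ, x, b) is continuous on K; (3) for every φ ∈ K, x ∈ E, 0 ≤ η ≤ 1, b ∈ G and f ∈ ℋ one has R(φ, x, ηb) ≤ η R(φ, x, b) and η S(f, x, b) ≤ S(f, x, ηb). Then f ∈ ℋ is RS-abstract p-summing if and only if there exist a constant C > 0 and a Borel probability measure μ on K such that S(f, x, b) ≤ C (∫_K R(φ, x, b)^p dμ(φ))^{1/p} for all x ∈ E and b ∈ G. -/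

import Mathlib

open MeasureTheory Finset
open scoped ENNReal NNReal

lemma clamp_sum_ge (n : ℕ) (t : ℝ) (ht : 0 ≤ t) :
    ∀ m : ℕ, min t ((m : ℝ)/n) ≤
      ∑ i ∈ Finset.range m, min (max (t - (i : ℝ)/n) 0) (1/n) := by
  have hn0 : (0:ℝ) ≤ 1/n := by positivity
  intro m
  induction m with
  | zero => simpa using min_le_right t 0
  | succ m ih =>
    rw [Finset.sum_range_succ, Nat.cast_add, Nat.cast_one, add_div]
    have hterm : (0:ℝ) ≤ min (max (t - (m:ℝ)/n) 0) (1/n) :=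
      le_min (le_max_right _ _) hn0
    rcases le_total t ((m : ℝ)/n) with h | h
    · have h1 : min t ((m:ℝ)/n + 1/n) ≤ min t ((m:ℝ)/n) := by
        rw [min_eq_left h]; exact min_le_left _ _
      linarith
    · have hmax : max (t - (m:ℝ)/n) 0 = t - (m:ℝ)/n := max_eq_left (by linarith)
      rw [hmax]
      have ihm : (m:ℝ)/n ≤ ∑ i ∈ Finset.range m, min (max (t - (i:ℝ)/n) 0) (1/n) := by
        have := ih; rwa [min_eq_right h] at this
      rcases le_total (t - (m:ℝ)/n) (1/n) with h2 | h2
      · rw [min_eq_left h2]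
        have : min t ((m:ℝ)/n + 1/n) ≤ t := min_le_left _ _
        linarith
      · rw [min_eq_right h2]
        have : min t ((m:ℝ)/n + 1/n) ≤ (m:ℝ)/n + 1/n := min_le_right _ _
        linarith

lemma indic_sum_le (n : ℕ) (t : ℝ) (ht : 0 ≤ t) (hn : 0 < n) :
    ∀ m : ℕ, (∑ i ∈ Finset.range m, if ((i : ℝ)+1)/n ≤ t then (1:ℝ) else 0)
      ≤ n * min t ((m : ℝ)/n) := by
  have hn' : (0:ℝ) < n := by exact_mod_cast hn
  intro m
  induction m with
  | zero => simp [min_eq_right ht]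
  | succ m ih =>
    rw [Finset.sum_range_succ, Nat.cast_add, Nat.cast_one]
    by_cases hc : ((m : ℝ)+1)/n ≤ t
    · rw [if_pos hc]
      have h1 : min t ((m:ℝ)/n) = (m:ℝ)/n := by
        rw [min_eq_right]
        refine le_trans ?_ hc
        gcongr
        linarith
      have h2 : min t (((m:ℝ)+1)/n) = ((m:ℝ)+1)/n := min_eq_right hc
      rw [h2]
      rw [h1] at ih
      have : (n:ℝ) * (((m:ℝ)+1)/n) = n * ((m:ℝ)/n) + 1 := by
        field_simp
      linarith
    · rw [if_neg hc]
      have h3 : min t ((m:ℝ)/n) ≤ min t (((m:ℝ)+1)/n) := by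
        apply min_le_min le_rfl
        gcongr
        linarith
      nlinarith

open TopologicalSpace

theorem rmk_one_sided {K : Type*} [TopologicalSpace K] [CompactSpace K] [T2Space K]
    [MeasurableSpace K] [BorelSpace K]
    (Λ : C(K, ℝ) →ₗ[ℝ] ℝ) (hpos : ∀ u : C(K, ℝ), (∀ φ, 0 ≤ u φ) → 0 ≤ Λ u)
    (hone : Λ 1 = 1) :
    ∃ μ : Measure K, IsProbabilityMeasure μ ∧
      ∀ u : C(K, ℝ), (∀ φ, 0 ≤ u φ) → Λ u ≤ ∫ φ, u φ ∂μ := by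
  classical
  -- monotonicity of Λ
  have hmono : ∀ u v : C(K, ℝ), (∀ φ, u φ ≤ v φ) → Λ u ≤ Λ v := by
    intro u v h
    have := hpos (v - u) (fun φ => by simpa using sub_nonneg.mpr (h φ))
    rw [map_sub] at this; linarith
  set T : Set K → Set C(K, ℝ) :=
    fun Kc => {g | (∀ x, 0 ≤ g x) ∧ ∀ x ∈ Kc, 1 ≤ g x} with hT
  set lam : Set K → ℝ := fun Kc => sInf (Λ '' T Kc) with hlam
  have hone_mem : ∀ Kc : Set K, (1 : C(K, ℝ)) ∈ T Kc :=
    fun Kc => ⟨fun x => by norm_num, fun x _ => by norm_num⟩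
  have hne : ∀ Kc : Set K, (Λ '' T Kc).Nonempty := fun Kc => ⟨Λ 1, 1, hone_mem Kc, rfl⟩
  have hbdd : ∀ Kc : Set K, BddBelow (Λ '' T Kc) := by
    rintro Kc
    exact ⟨0, by rintro y ⟨g, hg, rfl⟩; exact hpos g hg.1⟩
  have lam_nonneg : ∀ Kc : Set K, 0 ≤ lam Kc := by
    intro Kc
    exact le_csInf (hne Kc) (by rintro y ⟨g, hg, rfl⟩; exact hpos g hg.1)
  have lam_le : ∀ (Kc : Set K) (g : C(K, ℝ)), g ∈ T Kc → lam Kc ≤ Λ g :=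
    fun Kc g hg => csInf_le (hbdd Kc) ⟨g, hg, rfl⟩
  have lam_le_one : ∀ Kc : Set K, lam Kc ≤ 1 :=
    fun Kc => (lam_le Kc 1 (hone_mem Kc)).trans_eq hone
  have lam_mono : ∀ K1 K2 : Set K, K1 ⊆ K2 → lam K1 ≤ lam K2 := by
    intro K1 K2 h
    apply csInf_le_csInf (hbdd K1) (hne K2)
    exact Set.image_mono (fun g hg => ⟨hg.1, fun x hx => hg.2 x (h hx)⟩)
  -- subadditivity
  have lam_subadd : ∀ K1 K2 : Set K, lam (K1 ∪ K2) ≤ lam K1 + lam K2 := by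
    intro K1 K2
    apply le_of_forall_pos_le_add
    intro ε hε
    obtain ⟨y1, ⟨g1, hg1, rfl⟩, hy1⟩ :=
      exists_lt_of_csInf_lt (hne K1) (lt_add_of_pos_right (lam K1) (half_pos hε))
    obtain ⟨y2, ⟨g2, hg2, rfl⟩, hy2⟩ :=
      exists_lt_of_csInf_lt (hne K2) (lt_add_of_pos_right (lam K2) (half_pos hε))
    have hmem : g1 + g2 ∈ T (K1 ∪ K2) := by
      constructor
      · intro x; have := hg1.1 x; have := hg2.1 x
        simp only [ContinuousMap.add_apply]; linarith
      · rintro x (hx | hx)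
        · have := hg1.2 x hx; have := hg2.1 x
          simp only [ContinuousMap.add_apply]; linarith
        · have := hg2.2 x hx; have := hg1.1 x
          simp only [ContinuousMap.add_apply]; linarith
    have := lam_le _ _ hmem
    rw [map_add] at this
    linarith
  -- superadditivity on disjoint compacts
  have lam_superadd : ∀ K1 K2 : Set K, IsCompact K1 → IsCompact K2 → Disjoint K1 K2 →
      lam K1 + lam K2 ≤ lam (K1 ∪ K2) := by
    intro K1 K2 h1 h2 hd
    obtain ⟨v, hv0, hv1, hv01⟩ :=
      exists_continuous_zero_one_of_isClosed h1.isClosed h2.isClosed hd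
    apply le_csInf (hne _)
    rintro y ⟨g, hg, rfl⟩
    have hA : g * (1 - v) ∈ T K1 := by
      constructor
      · intro x
        have h1x := (hv01 x).1; have h2x := (hv01 x).2; have := hg.1 x
        simp only [ContinuousMap.mul_apply, ContinuousMap.sub_apply,
          ContinuousMap.one_apply]
        nlinarith
      · intro x hx
        have := hg.2 x (Or.inl hx)
        have hvx : v x = 0 := hv0 hx
        simp only [ContinuousMap.mul_apply, ContinuousMap.sub_apply,
          ContinuousMap.one_apply, hvx]
        linarith
    have hB : g * v ∈ T K2 := by
      constructor
      · intro x
        have h1x := (hv01 x).1; have := hg.1 x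
        simp only [ContinuousMap.mul_apply]
        nlinarith
      · intro x hx
        have := hg.2 x (Or.inr hx)
        have hvx : v x = 1 := hv1 hx
        simp only [ContinuousMap.mul_apply, hvx]
        linarith
    have hsum : g * (1 - v) + g * v = g := by ext φ; simp; ring
    have := lam_le K1 _ hA
    have := lam_le K2 _ hB
    have hΛ : Λ (g * (1 - v)) + Λ (g * v) = Λ g := by
      rw [← map_add, hsum]
    linarith
  -- the content
  let μC : Content K :=
    { toFun := fun Kc => ⟨lam Kc, lam_nonneg _⟩
      mono' := fun K1 K2 h => by
        exact lam_mono K1 K2 h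
      sup_disjoint' := fun K1 K2 hd _ _ => by
        have h1 := lam_subadd (K1 : Set K) K2
        have h2 := lam_superadd (K1 : Set K) K2 K1.2 K2.2 hd
        have : lam ((K1 : Set K) ∪ K2) = lam K1 + lam K2 := le_antisymm h1 h2
        ext
        exact this
      sup_le' := fun K1 K2 => by
        exact lam_subadd (K1 : Set K) K2 }
  set μ : Measure K := μC.measure with hμdef
  have lam_univ : lam Set.univ = 1 := by
    refine le_antisymm (lam_le_one _) ?_
    apply le_csInf (hne _)
    rintro y ⟨g, hg, rfl⟩
    calc (1:ℝ) = Λ 1 := hone.symm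
    _ ≤ Λ g := hmono _ _ (fun φ => by simpa using hg.2 φ (Set.mem_univ φ))
  have hμuniv : μ Set.univ = 1 := by
    have h1 : μ Set.univ = μC.outerMeasure Set.univ :=
      μC.measure_apply MeasurableSet.univ
    have h2 : μC.outerMeasure (Set.univ : Set K) =
        μC.innerContent ⟨Set.univ, isOpen_univ⟩ :=
      μC.outerMeasure_opens ⟨Set.univ, isOpen_univ⟩
    have h3 := μC.innerContent_of_isCompact isCompact_univ isOpen_univ
    rw [h1, h2, h3]
    have : μC.toFun ⟨Set.univ, isCompact_univ⟩ = 1 := by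
      ext; exact lam_univ
    show (μC.toFun ⟨Set.univ, isCompact_univ⟩ : ℝ≥0∞) = 1
    rw [this]; simp
  have hprob : IsProbabilityMeasure μ := ⟨hμuniv⟩
  have hfin : ∀ s : Set K, μ s ≠ ⊤ := fun s => (measure_lt_top μ s).ne
  -- content value below measure of compacts
  have lam_le_meas : ∀ (Kc : Set K) (h : IsCompact Kc), lam Kc ≤ (μ Kc).toReal := by
    intro Kc h
    have h1 : (μC.toFun ⟨Kc, h⟩ : ℝ≥0∞) ≤ μC.outerMeasure Kc :=
      μC.le_outerMeasure_compacts ⟨Kc, h⟩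
    have h2 : μ Kc = μC.outerMeasure Kc := μC.measure_apply h.isClosed.measurableSet
    have h3 : (μC.toFun ⟨Kc, h⟩ : ℝ≥0∞) ≤ μ Kc := h2 ▸ h1
    have := ENNReal.toReal_mono (hfin Kc) h3
    rw [ENNReal.coe_toReal] at this; exact this
  refine ⟨μ, hprob, ?_⟩
  -- main inequality, first for 0 ≤ u ≤ 1
  have key : ∀ u : C(K, ℝ), (∀ φ, 0 ≤ u φ) → (∀ φ, u φ ≤ 1) → Λ u ≤ ∫ φ, u φ ∂μ := by
    intro u hu0 hu1
    have hint_u : Integrable (fun φ => u φ) μ :=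
      u.continuous.integrable_of_hasCompactSupport (isClosed_tsupport _).isCompact
    have main : ∀ n : ℕ, 0 < n → Λ u ≤ ∫ φ, u φ ∂μ + 1/n := by
      intro n hn
      have hn' : (0:ℝ) < n := by exact_mod_cast hn
      -- compact level sets
      set Kc : ℕ → Set K := fun i => {φ | (i : ℝ)/n ≤ u φ} with hKc
      have hKcl : ∀ i, IsClosed (Kc i) := fun i =>
        isClosed_le continuous_const u.continuous
      have hKcpt : ∀ i, IsCompact (Kc i) := fun i => (hKcl i).isCompact
      -- layers
      set h : ℕ → C(K, ℝ) := fun i =>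
        ⟨fun φ => min (max (u φ - (i : ℝ)/n) 0) (1/n),
          (((u.continuous.sub continuous_const).max continuous_const).min
            continuous_const)⟩ with hh
      have hlayer0 : ∀ i φ, 0 ≤ h i φ := fun i φ =>
        le_min (le_max_right _ _) (by positivity)
      -- u ≤ ∑ layers
      have hsum_ge : ∀ φ, u φ ≤ ∑ i ∈ Finset.range n, h i φ := by
        intro φ
        have := clamp_sum_ge n (u φ) (hu0 φ) n
        rw [min_eq_left] at this
        · exact this
        · rw [div_self hn'.ne']; exact hu1 φ
      -- Λ of each layer
      have hlayer_le : ∀ i, Λ (h i) ≤ lam (Kc i) / n := by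
        intro i
        rw [le_div_iff₀ hn', mul_comm]
        have : (n : ℝ) * Λ (h i) = Λ ((n : ℝ) • h i) := by rw [_root_.map_smul, smul_eq_mul]
        rw [this]
        apply le_csInf (hne _)
        rintro y ⟨g, hg, rfl⟩
        apply hmono
        intro φ
        simp only [ContinuousMap.smul_apply, smul_eq_mul]
        by_cases hφ : φ ∈ Kc i
        · have := hg.2 φ hφ
          have h2 : h i φ ≤ 1/n := min_le_right _ _
          calc (n:ℝ) * h i φ ≤ n * (1/n) := by nlinarith [hlayer0 i φ]
          _ = 1 := by field_simp
          _ ≤ g φ := this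
        · have hzero : h i φ = 0 := by
            have : u φ - (i:ℝ)/n < 0 := by
              simp only [hKc, Set.mem_setOf_eq, not_le] at hφ
              linarith
            simp only [hh, ContinuousMap.coe_mk]
            rw [max_eq_right this.le, min_eq_left (by positivity)]
          rw [hzero, mul_zero]
          exact hg.1 φ
      -- indicator sum bound for the integral
      have hint_ind : ∀ i : ℕ, Integrable ((Kc i).indicator (fun _ => (1:ℝ))) μ :=
        fun i => (integrable_const (1:ℝ)).indicator (hKcl i).measurableSet
      have hmeas_sum : ∀ i : ℕ,
          ∫ φ, (Kc i).indicator (fun _ => (1:ℝ)) φ ∂μ = (μ (Kc i)).toReal := by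
        intro i
        rw [integral_indicator_const (1:ℝ) (hKcl i).measurableSet]
        simp [Measure.real]
      have hpoint : ∀ φ, (∑ i ∈ Finset.range n,
          (Kc (i+1)).indicator (fun _ => (1:ℝ)) φ) ≤ n * u φ := by
        intro φ
        have := indic_sum_le n (u φ) (hu0 φ) hn n
        rw [min_eq_left] at this
        · refine le_trans (le_of_eq ?_) this
          apply Finset.sum_congr rfl
          intro i _
          simp only [Set.indicator_apply, hKc, Set.mem_setOf_eq]
          congr 1
          · push_cast; rfl
        · rw [div_self hn'.ne']; exact hu1 φ
      have hint_bound : (∑ i ∈ Finset.range n, (μ (Kc (i+1))).toReal)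
          ≤ n * ∫ φ, u φ ∂μ := by
        calc ∑ i ∈ Finset.range n, (μ (Kc (i+1))).toReal
            = ∑ i ∈ Finset.range n, ∫ φ, (Kc (i+1)).indicator (fun _ => (1:ℝ)) φ ∂μ := by
              exact Finset.sum_congr rfl (fun i _ => (hmeas_sum (i+1)).symm)
          _ = ∫ φ, (∑ i ∈ Finset.range n, (Kc (i+1)).indicator (fun _ => (1:ℝ)) φ) ∂μ := by
              rw [integral_finset_sum]
              exact fun i _ => hint_ind (i+1)
          _ ≤ ∫ φ, n * u φ ∂μ := by
              apply integral_mono _ (hint_u.const_mul _) hpoint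
              exact integrable_finset_sum _ (fun i _ => hint_ind (i+1))
          _ = n * ∫ φ, u φ ∂μ := integral_const_mul _ _
      -- put it together
      obtain ⟨k, rfl⟩ := Nat.exists_eq_succ_of_ne_zero hn.ne'
      have step1 : Λ u ≤ ∑ i ∈ Finset.range (k+1), Λ (h i) := by
        rw [← map_sum]
        exact hmono _ _ (fun φ => by
          simpa [ContinuousMap.coe_sum, Finset.sum_apply] using hsum_ge φ)
      have step2 : ∑ i ∈ Finset.range (k+1), Λ (h i)
          ≤ ∑ i ∈ Finset.range (k+1), lam (Kc i) / (k+1:ℕ) :=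
        Finset.sum_le_sum (fun i _ => hlayer_le i)
      have step3 : ∑ i ∈ Finset.range (k+1), lam (Kc i)
          = lam (Kc 0) + ∑ i ∈ Finset.range k, lam (Kc (i+1)) :=
        Finset.sum_range_succ' _ k |>.trans (by ring)
      have step4 : ∑ i ∈ Finset.range k, lam (Kc (i+1))
          ≤ ∑ i ∈ Finset.range (k+1), (μ (Kc (i+1))).toReal := by
        refine le_trans (Finset.sum_le_sum (fun i _ => lam_le_meas _ (hKcpt (i+1)))) ?_
        refine Finset.sum_le_sum_of_subset_of_nonneg
          (Finset.range_subset_range.mpr (Nat.le_succ k)) (fun i _ _ => ENNReal.toReal_nonneg)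
      have hnn : (0:ℝ) < ((k+1:ℕ):ℝ) := hn'
      calc Λ u ≤ ∑ i ∈ Finset.range (k+1), lam (Kc i) / (k+1:ℕ) := step1.trans step2
        _ = (∑ i ∈ Finset.range (k+1), lam (Kc i)) / (k+1:ℕ) := by
            rw [Finset.sum_div]
        _ ≤ (1 + (k+1:ℕ) * ∫ φ, u φ ∂μ) / (k+1:ℕ) := by
            gcongr ?_ / _
            rw [step3]
            have hb := lam_le_one (Kc 0)
            have hcomb := step4.trans hint_bound
            push_cast at hcomb ⊢
            linarith
        _ = ∫ φ, u φ ∂μ + 1/(k+1:ℕ) := by field_simp; ring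
    -- pass to the limit
    apply le_of_forall_pos_le_add
    intro ε hε
    obtain ⟨n, hnlt⟩ := exists_nat_one_div_lt hε
    have := main (n+1) (Nat.succ_pos n)
    push_cast at this hnlt ⊢
    linarith
  -- general nonnegative u by scaling
  intro u hu0
  set c : ℝ := ‖u‖ + 1 with hc
  have hcpos : 0 < c := by positivity
  have h1 : ∀ φ, c⁻¹ * u φ ≤ 1 := by
    intro φ
    rw [inv_mul_le_iff₀ hcpos, mul_one]
    have h := u.norm_coe_le_norm φ
    rw [Real.norm_eq_abs] at h
    have h2 := le_abs_self (u φ)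
    rw [hc]
    linarith
  have h0 : ∀ φ, 0 ≤ c⁻¹ * u φ :=
    fun φ => mul_nonneg (inv_nonneg.mpr hcpos.le) (hu0 φ)
  have := key (c⁻¹ • u) (fun φ => by simpa using h0 φ) (fun φ => by simpa using h1 φ)
  rw [_root_.map_smul, smul_eq_mul] at this
  have hi : ∫ φ, (c⁻¹ • u) φ ∂μ = c⁻¹ * ∫ φ, u φ ∂μ := by
    simp only [ContinuousMap.smul_apply, smul_eq_mul]
    exact integral_const_mul _ _
  rw [hi] at this
  calc Λ u = c * (c⁻¹ * Λ u) := by field_simp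
    _ ≤ c * (c⁻¹ * ∫ φ, u φ ∂μ) := by
        apply mul_le_mul_of_nonneg_left this hcpos.le
    _ = ∫ φ, u φ ∂μ := by field_simp
/-- **Unified Pietsch Domination Theorem** (Botelho–Pellegrino–Rueda):
under hypotheses (1), (2) and (3) on `R` and `S`, a map `f ∈ ℋ` is
`RS`-abstract `p`-summing iff there are a constant `C > 0` and a Borel
probability measure `μ` on `K` with
`S f x b ≤ C * (∫ R φ x b ^ p dμ)^(1/p)` for all `x ∈ E`, `b ∈ G`. -/
theorem unified_pietsch_domination
    {X Y E G K : Type*} [Nonempty X] [Nonempty Y] [Nonempty E]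
    [NormedAddCommGroup G] [NormedSpace ℝ G] [CompleteSpace G]
    [TopologicalSpace K] [CompactSpace K] [T2Space K] [Nonempty K]
    [MeasurableSpace K] [BorelSpace K]
    (ℋ : Set (X → Y)) (hℋ : ℋ.Nonempty)
    (R : K → E → G → ℝ) (S : (X → Y) → E → G → ℝ)
    (hR0 : ∀ φ x b, 0 ≤ R φ x b) (hS0 : ∀ f x b, 0 ≤ S f x b)
    (p : ℝ) (hp : 0 < p)
    (h1 : ∀ f ∈ ℋ, ∃ x₀ : E, ∀ (φ : K) (b : G),
      R φ x₀ b = 0 ∧ S f x₀ b = 0)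
    (h2 : ∀ x b, Continuous fun φ => R φ x b)
    (h3R : ∀ (φ : K) (x : E) (b : G) (η : ℝ), 0 ≤ η → η ≤ 1 →
      R φ x (η • b) ≤ η * R φ x b)
    (h3S : ∀ f ∈ ℋ, ∀ (x : E) (b : G) (η : ℝ), 0 ≤ η → η ≤ 1 →
      η * S f x b ≤ S f x (η • b))
    (f : X → Y) (hf : f ∈ ℋ) :
    (∃ C > 0, ∀ (m : ℕ) (x : Fin m → E) (b : Fin m → G),
        (∑ j, S f (x j) (b j) ^ p) ^ (1 / p) ≤
          C * ⨆ φ : K, (∑ j, R φ (x j) (b j) ^ p) ^ (1 / p)) ↔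
    (∃ C > 0, ∃ μ : Measure K, IsProbabilityMeasure μ ∧
        ∀ (x : E) (b : G),
          S f x b ≤ C * (∫ φ, R φ x b ^ p ∂μ) ^ (1 / p)) := by
  classical
  have hp' : p ≠ 0 := hp.ne'
  -- the continuous maps φ ↦ R φ x b ^ p
  let gR : E → G → C(K, ℝ) := fun x b =>
    ⟨fun φ => R φ x b ^ p, (h2 x b).rpow_const (fun _ => Or.inr hp.le)⟩
  have gR_nonneg : ∀ x b φ, 0 ≤ gR x b φ :=
    fun x b φ => Real.rpow_nonneg (hR0 φ x b) p
  have hint : ∀ (μ : Measure K) [IsFiniteMeasure μ] (v : C(K, ℝ)),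
      Integrable (fun φ => v φ) μ := fun μ _ v =>
    v.continuous.integrable_of_hasCompactSupport (isClosed_tsupport _).isCompact
  constructor
  · -- hard direction: summing → domination
    rintro ⟨C, hC, hsum⟩
    have hCp : (0:ℝ) ≤ C ^ p := Real.rpow_nonneg hC.le p
    -- the convex sets
    set D : Set C(K, ℝ) := {u | ∃ (m : ℕ) (x : Fin m → E) (b : Fin m → G), ∀ φ,
      u φ ≤ ∑ j, (S f (x j) (b j) ^ p - C ^ p * R φ (x j) (b j) ^ p)} with hD
    set P : Set C(K, ℝ) := {u | ∀ φ, 0 < u φ} with hP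
    have hzero : (0 : C(K, ℝ)) ∈ D :=
      ⟨0, Fin.elim0, Fin.elim0, fun φ => by simp⟩
    have hadd : ∀ u ∈ D, ∀ v ∈ D, u + v ∈ D := by
      rintro u ⟨m1, x1, b1, hu⟩ v ⟨m2, x2, b2, hv⟩
      refine ⟨m1 + m2, Fin.append x1 x2, Fin.append b1 b2, fun φ => ?_⟩
      rw [Fin.sum_univ_add]
      simp only [Fin.append_left, Fin.append_right, ContinuousMap.add_apply]
      exact add_le_add (hu φ) (hv φ)
    have hscale : ∀ (t : ℝ), 0 ≤ t → t ≤ 1 → ∀ u ∈ D, t • u ∈ D := by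
      intro t ht0 ht1 u hu
      obtain ⟨m, x, b, hle⟩ := hu
      rcases eq_or_lt_of_le ht0 with h | htpos
      · rw [← h, zero_smul]; exact hzero
      · set η : ℝ := t ^ (1/p) with hη
        have hη0 : 0 ≤ η := Real.rpow_nonneg ht0 _
        have hη1 : η ≤ 1 := Real.rpow_le_one ht0 ht1 (by positivity)
        have hηp : η ^ p = t := by rw [hη, one_div, Real.rpow_inv_rpow ht0 hp']
        refine ⟨m, x, fun j => η • b j, fun φ => ?_⟩
        have hpt : ∀ j : Fin m,
            t * (S f (x j) (b j) ^ p - C ^ p * R φ (x j) (b j) ^ p)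
            ≤ S f (x j) (η • b j) ^ p - C ^ p * R φ (x j) (η • b j) ^ p := by
          intro j
          have hS' : t * S f (x j) (b j) ^ p ≤ S f (x j) (η • b j) ^ p := by
            have h3 := h3S f hf (x j) (b j) η hη0 hη1
            have h4 := Real.rpow_le_rpow (mul_nonneg hη0 (hS0 _ _ _)) h3 hp.le
            rwa [Real.mul_rpow hη0 (hS0 _ _ _), hηp] at h4
          have hR' : R φ (x j) (η • b j) ^ p ≤ t * R φ (x j) (b j) ^ p := by
            have h3 := h3R φ (x j) (b j) η hη0 hη1
            have h4 := Real.rpow_le_rpow (hR0 _ _ _) h3 hp.le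
            rwa [Real.mul_rpow hη0 (hR0 _ _ _), hηp] at h4
          have h5 := mul_le_mul_of_nonneg_left hR' hCp
          linarith
        calc (t • u) φ = t * u φ := rfl
          _ ≤ t * ∑ j, (S f (x j) (b j) ^ p - C ^ p * R φ (x j) (b j) ^ p) :=
              mul_le_mul_of_nonneg_left (hle φ) ht0
          _ = ∑ j, t * (S f (x j) (b j) ^ p - C ^ p * R φ (x j) (b j) ^ p) :=
              Finset.mul_sum _ _ _
          _ ≤ _ := Finset.sum_le_sum (fun j _ => hpt j)
    have hDconv : Convex ℝ D := by
      intro u hu v hv a b' ha hb hab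
      exact hadd _ (hscale a ha (by linarith) u hu) _ (hscale b' hb (by linarith) v hv)
    have hPconv : Convex ℝ P := by
      intro u hu v hv a b' ha hb hab φ
      simp only [ContinuousMap.add_apply, ContinuousMap.smul_apply, smul_eq_mul]
      rcases eq_or_lt_of_le ha with h | ha'
      · have hb1 : b' = 1 := by linarith
        rw [← h, hb1]; simpa using hv φ
      · exact add_pos_of_pos_of_nonneg (mul_pos ha' (hu φ))
          (mul_nonneg hb (hv φ).le)
    have hPopen : IsOpen P := by
      rw [Metric.isOpen_iff]
      intro u hu
      obtain ⟨φ0, -, hφ0⟩ :=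
        isCompact_univ.exists_isMinOn Set.univ_nonempty u.continuous.continuousOn
      refine ⟨u φ0, hu φ0, fun v hv => ?_⟩
      intro φ
      have hd : dist (v φ) (u φ) ≤ dist v u := ContinuousMap.dist_apply_le_dist φ
      rw [Metric.mem_ball] at hv
      rw [Real.dist_eq] at hd
      have h6 : |v φ - u φ| < u φ0 := lt_of_le_of_lt hd hv
      have h7 := abs_lt.mp h6
      have h8 : u φ0 ≤ u φ := hφ0 (Set.mem_univ φ)
      linarith [h7.1]
    have hdisj : Disjoint P D := by
      rw [Set.disjoint_left]
      rintro u huP ⟨m, x, b, hle⟩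
      set F : C(K, ℝ) := ∑ j : Fin m, gR (x j) (b j) with hF
      have hFapp : ∀ φ, F φ = ∑ j, R φ (x j) (b j) ^ p := by
        intro φ
        rw [hF, ContinuousMap.sum_apply]
        rfl
      have hF0 : ∀ φ, 0 ≤ F φ := fun φ => by
        rw [hFapp]
        exact Finset.sum_nonneg (fun j _ => Real.rpow_nonneg (hR0 _ _ _) _)
      obtain ⟨φ0, -, hφ0⟩ :=
        isCompact_univ.exists_isMaxOn Set.univ_nonempty F.continuous.continuousOn
      have hFmax : ∀ φ, F φ ≤ F φ0 := fun φ => hφ0 (Set.mem_univ φ)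
      have hsum_nonneg : (0:ℝ) ≤ ∑ j, S f (x j) (b j) ^ p :=
        Finset.sum_nonneg (fun j _ => Real.rpow_nonneg (hS0 _ _ _) _)
      have hkey : ∑ j, S f (x j) (b j) ^ p ≤ C ^ p * F φ0 := by
        have h := hsum m x b
        have hsup_le : (⨆ φ : K, (∑ j, R φ (x j) (b j) ^ p) ^ (1/p))
            ≤ (F φ0) ^ (1/p) := by
          apply ciSup_le
          intro φ
          show (∑ j, R φ (x j) (b j) ^ p) ^ (1/p) ≤ (F φ0) ^ (1/p)
          rw [← hFapp φ]
          exact Real.rpow_le_rpow (hF0 φ) (hFmax φ) (by positivity)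
        have h' : (∑ j, S f (x j) (b j) ^ p) ^ (1/p) ≤ C * (F φ0) ^ (1/p) :=
          h.trans (mul_le_mul_of_nonneg_left hsup_le hC.le)
        have h'' := Real.rpow_le_rpow (Real.rpow_nonneg hsum_nonneg _) h' hp.le
        rwa [one_div, Real.rpow_inv_rpow hsum_nonneg hp',
          Real.mul_rpow hC.le (Real.rpow_nonneg (hF0 φ0) _),
          Real.rpow_inv_rpow (hF0 φ0) hp'] at h''
      have hu0 := hle φ0
      rw [Finset.sum_sub_distrib] at hu0
      have hmulsum : ∑ j, C ^ p * R φ0 (x j) (b j) ^ p = C ^ p * F φ0 := by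
        rw [hFapp φ0, Finset.mul_sum]
      rw [hmulsum] at hu0
      have := huP φ0
      linarith
    obtain ⟨L, c, hLP, hLD⟩ := geometric_hahn_banach_open hPconv hPopen hDconv hdisj
    have hc0 : c ≤ 0 := by
      have := hLD 0 hzero
      simpa using this
    have hnsmul : ∀ (k : ℕ), ∀ u ∈ D, k • u ∈ D := by
      intro k
      induction k with
      | zero => intro u hu; rw [zero_smul]; exact hzero
      | succ k ih =>
        intro u hu
        rw [succ_nsmul]
        exact hadd _ (ih u hu) _ hu
    have hD0 : ∀ u ∈ D, 0 ≤ L u := by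
      intro u hu
      by_contra hneg
      push_neg at hneg
      obtain ⟨n, hn⟩ := exists_nat_gt (c / L u)
      have hmem := hLD _ (hnsmul n u hu)
      rw [map_nsmul, nsmul_eq_mul] at hmem
      have hlt : (n:ℝ) * L u < c := (div_lt_iff_of_neg hneg).mp hn
      linarith
    have h1P : (1 : C(K, ℝ)) ∈ P := fun φ => by simp
    have hL1 : L 1 < c := hLP _ h1P
    set a : ℝ := -(L 1) with ha
    have ha0 : 0 < a := by rw [ha]; linarith
    have hLnonpos : ∀ u : C(K, ℝ), (∀ φ, 0 ≤ u φ) → L u ≤ 0 := by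
      intro u hu
      by_contra hpos0
      push_neg at hpos0
      set ε : ℝ := L u / (2 * a) with hε
      have hεpos : 0 < ε := by rw [hε]; positivity
      have hmem : u + ε • (1 : C(K, ℝ)) ∈ P := by
        intro φ
        simp only [ContinuousMap.add_apply, ContinuousMap.smul_apply,
          ContinuousMap.one_apply, smul_eq_mul, mul_one]
        exact add_pos_of_nonneg_of_pos (hu φ) hεpos
      have hlt := hLP _ hmem
      rw [map_add, _root_.map_smul, smul_eq_mul] at hlt
      have hεa : ε * a = L u / 2 := by
        rw [hε]; field_simp
      have hL1a : L 1 = -a := by rw [ha]; ring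
      rw [hL1a] at hlt
      have : L u - L u / 2 < c := by
        calc L u - L u / 2 = L u + ε * (-a) := by rw [← hεa]; ring
        _ < c := hlt
      linarith
    let Λ : C(K, ℝ) →ₗ[ℝ] ℝ := a⁻¹ • (-(L : C(K, ℝ) →ₗ[ℝ] ℝ))
    have hΛapp : ∀ u : C(K, ℝ), Λ u = a⁻¹ * (-(L u)) := fun u => rfl
    have hΛpos : ∀ u : C(K, ℝ), (∀ φ, 0 ≤ u φ) → 0 ≤ Λ u := fun u hu => by
      rw [hΛapp]
      exact mul_nonneg (inv_nonneg.mpr ha0.le) (neg_nonneg.mpr (hLnonpos u hu))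
    have hΛone : Λ 1 = 1 := by
      rw [hΛapp, ← ha, inv_mul_cancel₀ ha0.ne']
    obtain ⟨μ, hμprob, hμint⟩ := rmk_one_sided Λ hΛpos hΛone
    refine ⟨C, hC, μ, hμprob, fun x b => ?_⟩
    have humem : (S f x b ^ p) • (1 : C(K, ℝ)) - (C ^ p) • gR x b ∈ D := by
      refine ⟨1, fun _ => x, fun _ => b, fun φ => ?_⟩
      simp [Fin.sum_univ_one, gR]
    have hLu := hD0 _ humem
    have hΛu : Λ ((S f x b ^ p) • (1 : C(K, ℝ)) - (C ^ p) • gR x b) ≤ 0 := by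
      rw [hΛapp]
      exact mul_nonpos_of_nonneg_of_nonpos (inv_nonneg.mpr ha0.le)
        (neg_nonpos.mpr hLu)
    rw [map_sub, _root_.map_smul, _root_.map_smul, smul_eq_mul, smul_eq_mul,
      hΛone, mul_one] at hΛu
    have h5 : S f x b ^ p ≤ C ^ p * Λ (gR x b) := by linarith
    have h6 : Λ (gR x b) ≤ ∫ φ, gR x b φ ∂μ := hμint _ (gR_nonneg x b)
    have hInonneg : 0 ≤ ∫ φ, R φ x b ^ p ∂μ :=
      integral_nonneg (fun φ => Real.rpow_nonneg (hR0 _ _ _) _)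
    have h7 : S f x b ^ p ≤ C ^ p * ∫ φ, R φ x b ^ p ∂μ :=
      h5.trans (mul_le_mul_of_nonneg_left h6 hCp)
    have h8 := Real.rpow_le_rpow (Real.rpow_nonneg (hS0 f x b) p) h7
      (by positivity : (0:ℝ) ≤ 1/p)
    rwa [one_div, Real.rpow_rpow_inv (hS0 f x b) hp',
      Real.mul_rpow hCp hInonneg,
      Real.rpow_rpow_inv hC.le hp', ← one_div] at h8
  · -- easy direction: domination → summing
    rintro ⟨C, hC, μ, hμ, hdom⟩
    refine ⟨C, hC, fun m x b => ?_⟩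
    set F : C(K, ℝ) := ∑ j : Fin m, gR (x j) (b j) with hF
    have hFapp : ∀ φ, F φ = ∑ j, R φ (x j) (b j) ^ p := by
      intro φ
      rw [hF, ContinuousMap.sum_apply]
      rfl
    have hF0 : ∀ φ, 0 ≤ F φ := fun φ => by
      rw [hFapp]
      exact Finset.sum_nonneg (fun j _ => Real.rpow_nonneg (hR0 _ _ _) _)
    obtain ⟨φ0, -, hφ0⟩ :=
      isCompact_univ.exists_isMaxOn Set.univ_nonempty F.continuous.continuousOn
    have hFmax : ∀ φ, F φ ≤ F φ0 := fun φ => hφ0 (Set.mem_univ φ)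
    have hCp : (0:ℝ) ≤ C ^ p := Real.rpow_nonneg hC.le p
    have step1 : ∀ j : Fin m,
        S f (x j) (b j) ^ p ≤ C ^ p * ∫ φ, R φ (x j) (b j) ^ p ∂μ := by
      intro j
      have h := hdom (x j) (b j)
      have hI : 0 ≤ ∫ φ, R φ (x j) (b j) ^ p ∂μ :=
        integral_nonneg (fun φ => Real.rpow_nonneg (hR0 _ _ _) _)
      have h' := Real.rpow_le_rpow (hS0 _ _ _) h hp.le
      rwa [Real.mul_rpow hC.le (Real.rpow_nonneg hI _),
        one_div, Real.rpow_inv_rpow hI hp'] at h'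
    have step2 : ∑ j, S f (x j) (b j) ^ p ≤ C ^ p * F φ0 := by
      calc ∑ j, S f (x j) (b j) ^ p
          ≤ ∑ j, C ^ p * ∫ φ, R φ (x j) (b j) ^ p ∂μ :=
            Finset.sum_le_sum (fun j _ => step1 j)
        _ = C ^ p * ∑ j, ∫ φ, R φ (x j) (b j) ^ p ∂μ := (Finset.mul_sum _ _ _).symm
        _ = C ^ p * ∫ φ, F φ ∂μ := by
            congr 1
            rw [← integral_finset_sum]
            · apply integral_congr_ae
              filter_upwards with φ
              rw [hFapp φ]
            · exact fun j _ => hint μ (gR (x j) (b j))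
        _ ≤ C ^ p * F φ0 := by
            apply mul_le_mul_of_nonneg_left _ hCp
            calc ∫ φ, F φ ∂μ ≤ ∫ _, F φ0 ∂μ :=
                integral_mono (hint μ F) (integrable_const _) hFmax
              _ = F φ0 := by simp
    have hsum_nonneg : (0:ℝ) ≤ ∑ j, S f (x j) (b j) ^ p :=
      Finset.sum_nonneg (fun j _ => Real.rpow_nonneg (hS0 _ _ _) _)
    have step3 : (∑ j, S f (x j) (b j) ^ p) ^ (1/p) ≤ C * (F φ0) ^ (1/p) := by
      have h' := Real.rpow_le_rpow hsum_nonneg step2 (by positivity : (0:ℝ) ≤ 1/p)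
      rwa [Real.mul_rpow hCp (hF0 φ0), one_div,
        Real.rpow_rpow_inv hC.le hp', ← one_div] at h'
    refine step3.trans (mul_le_mul_of_nonneg_left ?_ hC.le)
    have hbdd : BddAbove (Set.range fun φ : K =>
        (∑ j, R φ (x j) (b j) ^ p) ^ (1/p)) := by
      refine ⟨(F φ0) ^ (1/p), ?_⟩
      rintro y ⟨φ, rfl⟩
      show (∑ j, R φ (x j) (b j) ^ p) ^ (1/p) ≤ (F φ0) ^ (1/p)
      rw [← hFapp φ]
      exact Real.rpow_le_rpow (hF0 φ) (hFmax φ) (by positivity)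
    have := le_ciSup hbdd φ0
    rwa [← hFapp φ0] at this
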